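/- Concordance is an equivalence relation: for a sheaf of sets F on the site of smooth manifolds, define two sections σ₀, σ₁ ∈ F(M) to be concordant if there exists σ ∈ F(M × ℝ) whose restrictions along M × {0} → M × ℝ and M × {1} → M × ℝ equal σ₀ and σ₁ respectively. Then concordance is an equivalence relation on F(M). -/

import Mathlib

open Set
open scoped Manifold

/-- The fragment of a sheaf of sets on the site of smooth manifolds that is relevant to
concordance over a fixed manifold `M`: a presheaf of sets on the open subsets of the manifolds
`M × ℝ^a` (`a ∈ ℕ`) with contravariant functorial action along smooth maps, which satisfies the
sheaf gluing condition with respect to open covers.  Morphisms `U → V` (for `U ⊆ M × ℝ^a` and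
`V ⊆ M × ℝ^b`) are represented by ambient functions that are smooth on `U` and map `U` into `V`;
`map_congr` records that the induced map on sections only depends on the restriction to `U`. -/
structure SmoothSetSheaf
    {E : Type} [NormedAddCommGroup E] [NormedSpace ℝ E]
    {H : Type} [TopologicalSpace H] (I : ModelWithCorners ℝ E H)
    (M : Type) [TopologicalSpace M] [ChartedSpace H M] : Type 1 where
  sec : ∀ a : ℕ, Set (M × (Fin a → ℝ)) → Type
  map : ∀ {a b : ℕ} {U : Set (M × (Fin a → ℝ))} {V : Set (M × (Fin b → ℝ))}
      (f : M × (Fin a → ℝ) → M × (Fin b → ℝ)),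
      ContMDiffOn (I.prod 𝓘(ℝ, Fin a → ℝ)) (I.prod 𝓘(ℝ, Fin b → ℝ)) (⊤ : ℕ∞) f U →
      MapsTo f U V → sec b V → sec a U
  map_id : ∀ {a : ℕ} {U : Set (M × (Fin a → ℝ))} (h1) (h2) (σ : sec a U),
      map id h1 h2 σ = σ
  map_comp : ∀ {a b c : ℕ} {U : Set (M × (Fin a → ℝ))} {V : Set (M × (Fin b → ℝ))}
      {W : Set (M × (Fin c → ℝ))}
      (f : M × (Fin a → ℝ) → M × (Fin b → ℝ)) (hf1) (hf2 : MapsTo f U V)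
      (g : M × (Fin b → ℝ) → M × (Fin c → ℝ)) (hg1) (hg2 : MapsTo g V W)
      (hgf1) (hgf2 : MapsTo (g ∘ f) U W) (σ : sec c W),
      map f hf1 hf2 (map g hg1 hg2 σ) = map (g ∘ f) hgf1 hgf2 σ
  map_congr : ∀ {a b : ℕ} {U : Set (M × (Fin a → ℝ))} {V : Set (M × (Fin b → ℝ))}
      (f g : M × (Fin a → ℝ) → M × (Fin b → ℝ))
      (hf1 : ContMDiffOn (I.prod 𝓘(ℝ, Fin a → ℝ)) (I.prod 𝓘(ℝ, Fin b → ℝ)) (⊤ : ℕ∞) f U)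
      (hf2 : MapsTo f U V)
      (hg1 : ContMDiffOn (I.prod 𝓘(ℝ, Fin a → ℝ)) (I.prod 𝓘(ℝ, Fin b → ℝ)) (⊤ : ℕ∞) g U)
      (hg2 : MapsTo g U V)
      (h : ∀ x ∈ U, f x = g x) (σ : sec b V),
      map f hf1 hf2 σ = map g hg1 hg2 σ
  glue : ∀ {a : ℕ} {U : Set (M × (Fin a → ℝ))} (_ : IsOpen U) {ι : Type}
      (Us : ι → Set (M × (Fin a → ℝ))) (_ : ∀ i, IsOpen (Us i)) (hsub : ∀ i, Us i ⊆ U)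
      (_ : U ⊆ ⋃ i, Us i) (s : ∀ i, sec a (Us i)),
      (∀ i j, map id contMDiffOn_id (fun _ hx => hx.1 : MapsTo id (Us i ∩ Us j) (Us i)) (s i) =
        map id contMDiffOn_id (fun _ hx => hx.2 : MapsTo id (Us i ∩ Us j) (Us j)) (s j)) →
      ∃! t : sec a U,
        ∀ i, map id contMDiffOn_id (fun _ hx => hsub i hx : MapsTo id (Us i) U) t = s i

namespace SmoothSetSheaf

variable {E : Type} [NormedAddCommGroup E] [NormedSpace ℝ E]
  {H : Type} [TopologicalSpace H] {I : ModelWithCorners ℝ E H}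
  {M : Type} [TopologicalSpace M] [ChartedSpace H M]

/-- The inclusion `i_k : M ≅ M × {k} ↪ M × ℝ` (with `M = M × ℝ^0` and `M × ℝ = M × ℝ^1`). -/
def slice (k : ℝ) : M × (Fin 0 → ℝ) → M × (Fin 1 → ℝ) :=
  fun p => (p.1, fun _ => k)

theorem slice_smooth (k : ℝ) :
    ContMDiffOn (I.prod 𝓘(ℝ, Fin 0 → ℝ)) (I.prod 𝓘(ℝ, Fin 1 → ℝ)) (⊤ : ℕ∞) (slice (M := M) k)
      univ :=
  ((contMDiff_fst.prodMk contMDiff_const).contMDiffOn)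

/-- Two sections `σ₀, σ₁ ∈ F(M)` are concordant if there is a section over `M × ℝ` restricting
to `σ₀` along `M × {0}` and to `σ₁` along `M × {1}`. -/
def Concordant (F : SmoothSetSheaf I M) (σ₀ σ₁ : F.sec 0 univ) : Prop :=
  ∃ σ : F.sec 1 univ,
    F.map (slice 0) (slice_smooth 0) (mapsTo_univ _ _) σ = σ₀ ∧
    F.map (slice 1) (slice_smooth 1) (mapsTo_univ _ _) σ = σ₁

/-- Projection `M × ℝ → M = M × ℝ^0`. -/
def proj0 : M × (Fin 1 → ℝ) → M × (Fin 0 → ℝ) :=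
  fun p => (p.1, fun i => i.elim0)

theorem proj0_smooth :
    ContMDiff (I.prod 𝓘(ℝ, Fin 1 → ℝ)) (I.prod 𝓘(ℝ, Fin 0 → ℝ)) (⊤ : ℕ∞) (proj0 (M := M)) :=
  contMDiff_fst.prodMk contMDiff_const

/-- Reparametrization of the `ℝ` factor. -/
def reparam (h : ℝ → ℝ) : M × (Fin 1 → ℝ) → M × (Fin 1 → ℝ) :=
  fun p => (p.1, fun _ => h (p.2 0))

theorem slice_smooth' (k : ℝ) :
    ContMDiff (I.prod 𝓘(ℝ, Fin 0 → ℝ)) (I.prod 𝓘(ℝ, Fin 1 → ℝ)) (⊤ : ℕ∞) (slice (M := M) k) :=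
  contMDiff_fst.prodMk contMDiff_const

theorem reparam_smooth {h : ℝ → ℝ} (hh : ContDiff ℝ (↑(⊤ : ℕ∞)) h) :
    ContMDiff (I.prod 𝓘(ℝ, Fin 1 → ℝ)) (I.prod 𝓘(ℝ, Fin 1 → ℝ)) (⊤ : ℕ∞) (reparam (M := M) h) := by
  apply contMDiff_fst.prodMk
  have h1 : ContMDiff (I.prod 𝓘(ℝ, Fin 1 → ℝ)) 𝓘(ℝ, Fin 1 → ℝ) (⊤ : ℕ∞)
      (Prod.snd : M × (Fin 1 → ℝ) → Fin 1 → ℝ) := contMDiff_snd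
  have h2 : ContMDiff 𝓘(ℝ, Fin 1 → ℝ) 𝓘(ℝ, ℝ) (⊤ : ℕ∞) (fun v : Fin 1 → ℝ => v 0) :=
    (ContinuousLinearMap.proj (R := ℝ) (φ := fun _ : Fin 1 => ℝ) 0).contDiff.contMDiff
  have h3 : ContMDiff 𝓘(ℝ, ℝ) 𝓘(ℝ, Fin 1 → ℝ) (⊤ : ℕ∞) (fun t : ℝ => (fun _ : Fin 1 => t)) :=
    (ContinuousLinearMap.pi (fun _ : Fin 1 => ContinuousLinearMap.id ℝ ℝ)).contDiff.contMDiff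
  exact h3.comp (hh.contMDiff.comp (h2.comp h1))

/-- For a sheaf of sets `F` on the site of smooth manifolds, concordance is an equivalence
relation on `F(M)`. -/
theorem concordant_equivalence (F : SmoothSetSheaf I M) :
    Equivalence (Concordant F) := by
  constructor
  · -- reflexivity
    intro σ₀
    refine ⟨F.map proj0 proj0_smooth.contMDiffOn (mapsTo_univ _ _) σ₀, ?_, ?_⟩
    · rw [F.map_comp (slice 0) (slice_smooth 0) (mapsTo_univ _ _) proj0
        proj0_smooth.contMDiffOn (mapsTo_univ _ _)
        ((proj0_smooth.comp (slice_smooth' 0)).contMDiffOn) (mapsTo_univ _ _),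
        F.map_congr (proj0 ∘ slice 0) id _ _ contMDiffOn_id (mapsTo_univ _ _)
          (fun x _ => Prod.ext rfl (funext fun i => i.elim0)), F.map_id]
    · rw [F.map_comp (slice 1) (slice_smooth 1) (mapsTo_univ _ _) proj0
        proj0_smooth.contMDiffOn (mapsTo_univ _ _)
        ((proj0_smooth.comp (slice_smooth' 1)).contMDiffOn) (mapsTo_univ _ _),
        F.map_congr (proj0 ∘ slice 1) id _ _ contMDiffOn_id (mapsTo_univ _ _)
          (fun x _ => Prod.ext rfl (funext fun i => i.elim0)), F.map_id]
  · -- symmetry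
    rintro σ₀ σ₁ ⟨σ, h0, h1⟩
    have hsm : ContDiff ℝ (↑(⊤ : ℕ∞)) (fun t : ℝ => 1 - t) := contDiff_const.sub contDiff_id
    refine ⟨F.map (reparam fun t => 1 - t) (reparam_smooth hsm).contMDiffOn (mapsTo_univ _ _) σ,
      ?_, ?_⟩
    · rw [F.map_comp (slice 0) (slice_smooth 0) (mapsTo_univ _ _) _
        (reparam_smooth hsm).contMDiffOn (mapsTo_univ _ _)
        (((reparam_smooth hsm).comp (slice_smooth' 0)).contMDiffOn) (mapsTo_univ _ _),
        F.map_congr ((reparam fun t => 1 - t) ∘ slice 0) (slice 1) _ _ (slice_smooth 1) (mapsTo_univ _ _)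
          (fun x _ => Prod.ext rfl (funext fun _ => by norm_num [reparam, slice]))]
      exact h1
    · rw [F.map_comp (slice 1) (slice_smooth 1) (mapsTo_univ _ _) _
        (reparam_smooth hsm).contMDiffOn (mapsTo_univ _ _)
        (((reparam_smooth hsm).comp (slice_smooth' 1)).contMDiffOn) (mapsTo_univ _ _),
        F.map_congr ((reparam fun t => 1 - t) ∘ slice 1) (slice 0) _ _ (slice_smooth 0) (mapsTo_univ _ _)
          (fun x _ => Prod.ext rfl (funext fun _ => by norm_num [reparam, slice]))]
      exact h0
  · -- transitivity
    rintro σ₀ σ₁ σ₂ ⟨σ, hσ0, hσ1⟩ ⟨τ, hτ0, hτ1⟩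
    set φ : ℝ → ℝ := fun t => Real.smoothTransition (3 * t) with hφdef
    set ψ : ℝ → ℝ := fun t => Real.smoothTransition (3 * t - 2) with hψdef
    have hφ : ContDiff ℝ (↑(⊤ : ℕ∞)) φ :=
      Real.smoothTransition.contDiff.comp (contDiff_const.mul contDiff_id)
    have hψ : ContDiff ℝ (↑(⊤ : ℕ∞)) ψ :=
      Real.smoothTransition.contDiff.comp ((contDiff_const.mul contDiff_id).sub contDiff_const)
    set Uset : Set (M × (Fin 1 → ℝ)) := {p | p.2 0 < 2/3} with hUdef
    set Vset : Set (M × (Fin 1 → ℝ)) := {p | 1/3 < p.2 0} with hVdef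
    have hcont : Continuous (fun p : M × (Fin 1 → ℝ) => p.2 0) :=
      (continuous_apply 0).comp continuous_snd
    have hUopen : IsOpen Uset := isOpen_lt hcont continuous_const
    have hVopen : IsOpen Vset := isOpen_lt continuous_const hcont
    set Us : Bool → Set (M × (Fin 1 → ℝ)) := fun i => cond i Uset Vset with hUs
    have hUsopen : ∀ i, IsOpen (Us i) := by rintro (_ | _) <;> assumption
    have hsub : ∀ i, Us i ⊆ univ := fun i => subset_univ _
    have hcover : (univ : Set (M × (Fin 1 → ℝ))) ⊆ ⋃ i, Us i := by
      intro p _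
      rcases lt_or_ge (p.2 0) (2/3) with h | h
      · exact mem_iUnion.2 ⟨true, h⟩
      · exact mem_iUnion.2 ⟨false, show (1:ℝ)/3 < p.2 0 from lt_of_lt_of_le (by norm_num) h⟩
    set sU : F.sec 1 Uset :=
      F.map (reparam φ) (reparam_smooth hφ).contMDiffOn (mapsTo_univ _ _) σ with hsU
    set sV : F.sec 1 Vset :=
      F.map (reparam ψ) (reparam_smooth hψ).contMDiffOn (mapsTo_univ _ _) τ with hsV
    -- restriction of `sU` to any subset of `V` is the pullback of `σ₁`
    have keyU : ∀ (W : Set (M × (Fin 1 → ℝ))) (hWU : MapsTo id W Uset) (hWV : W ⊆ Vset),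
        F.map id contMDiffOn_id hWU sU =
          F.map proj0 proj0_smooth.contMDiffOn (mapsTo_univ _ _) σ₁ := by
      intro W hWU hWV
      rw [hsU, F.map_comp id contMDiffOn_id hWU (reparam φ)
          (reparam_smooth hφ).contMDiffOn (mapsTo_univ _ _)
          (reparam_smooth hφ).contMDiffOn (mapsTo_univ _ _),
        F.map_congr (reparam φ ∘ id) (slice 1 ∘ proj0) _ _
          (((slice_smooth' 1).comp proj0_smooth).contMDiffOn) (mapsTo_univ _ _)
          (fun x hx => Prod.ext rfl (funext fun _ =>
            Real.smoothTransition.one_of_one_le (show (1:ℝ) ≤ 3 * x.2 0 by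
              have : (1:ℝ)/3 < x.2 0 := hWV hx
              linarith))),
        ← F.map_comp proj0 proj0_smooth.contMDiffOn (mapsTo_univ _ _) (slice 1)
          (slice_smooth 1) (mapsTo_univ _ _)
          (((slice_smooth' 1).comp proj0_smooth).contMDiffOn) (mapsTo_univ _ _),
        hσ1]
    have keyV : ∀ (W : Set (M × (Fin 1 → ℝ))) (hWV : MapsTo id W Vset) (hWU : W ⊆ Uset),
        F.map id contMDiffOn_id hWV sV =
          F.map proj0 proj0_smooth.contMDiffOn (mapsTo_univ _ _) σ₁ := by
      intro W hWV hWU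
      rw [hsV, F.map_comp id contMDiffOn_id hWV (reparam ψ)
          (reparam_smooth hψ).contMDiffOn (mapsTo_univ _ _)
          (reparam_smooth hψ).contMDiffOn (mapsTo_univ _ _),
        F.map_congr (reparam ψ ∘ id) (slice 0 ∘ proj0) _ _
          (((slice_smooth' 0).comp proj0_smooth).contMDiffOn) (mapsTo_univ _ _)
          (fun x hx => Prod.ext rfl (funext fun _ =>
            Real.smoothTransition.zero_of_nonpos (show 3 * x.2 0 - 2 ≤ 0 by
              have : x.2 0 < 2/3 := hWU hx
              linarith))),
        ← F.map_comp proj0 proj0_smooth.contMDiffOn (mapsTo_univ _ _) (slice 0)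
          (slice_smooth 0) (mapsTo_univ _ _)
          (((slice_smooth' 0).comp proj0_smooth).contMDiffOn) (mapsTo_univ _ _),
        hτ0]
    have compat : ∀ i j, F.map id contMDiffOn_id
        (fun _ hx => hx.1 : MapsTo id (Us i ∩ Us j) (Us i))
          ((fun i => Bool.rec sV sU i : ∀ i, F.sec 1 (Us i)) i) =
        F.map id contMDiffOn_id (fun _ hx => hx.2 : MapsTo id (Us i ∩ Us j) (Us j))
          ((fun i => Bool.rec sV sU i : ∀ i, F.sec 1 (Us i)) j) := by
      rintro (_ | _) (_ | _)
      · rfl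
      · exact (keyV (Vset ∩ Uset) (fun _ hx => hx.1) (fun _ hx => hx.2)).trans
          (keyU (Vset ∩ Uset) (fun _ hx => hx.2) (fun _ hx => hx.1)).symm
      · exact (keyU (Uset ∩ Vset) (fun _ hx => hx.1) (fun _ hx => hx.2)).trans
          (keyV (Uset ∩ Vset) (fun _ hx => hx.2) (fun _ hx => hx.1)).symm
      · rfl
    obtain ⟨t, ht, -⟩ := F.glue isOpen_univ Us hUsopen hsub hcover
      (fun i => Bool.rec sV sU i) compat
    have hm0 : MapsTo (slice (M := M) 0) univ Uset := fun x _ =>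
      show (0:ℝ) < 2/3 by norm_num
    have hm1 : MapsTo (slice (M := M) 1) univ Vset := fun x _ =>
      show (1:ℝ)/3 < 1 by norm_num
    refine ⟨t, ?_, ?_⟩
    · calc F.map (slice 0) (slice_smooth 0) (mapsTo_univ _ _) t
          = F.map (slice 0) (slice_smooth 0) hm0
            (F.map id contMDiffOn_id (fun _ hx => hsub true hx) t) :=
            (F.map_comp (slice 0) (slice_smooth 0) hm0 id contMDiffOn_id
              (fun _ hx => hsub true hx) (slice_smooth 0) (mapsTo_univ _ _) t).symm
        _ = F.map (slice 0) (slice_smooth 0) hm0 sU := by rw [ht true]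
        _ = σ₀ := by
            rw [hsU, F.map_comp (slice 0) (slice_smooth 0) hm0 (reparam φ)
                (reparam_smooth hφ).contMDiffOn (mapsTo_univ _ _)
                (((reparam_smooth hφ).comp (slice_smooth' 0)).contMDiffOn) (mapsTo_univ _ _),
              F.map_congr (reparam φ ∘ slice 0) (slice 0) _ _ (slice_smooth 0) (mapsTo_univ _ _)
                (fun x _ => Prod.ext rfl (funext fun _ =>
                  Real.smoothTransition.zero_of_nonpos (by norm_num [slice])))]
            exact hσ0
    · calc F.map (slice 1) (slice_smooth 1) (mapsTo_univ _ _) t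
          = F.map (slice 1) (slice_smooth 1) hm1
            (F.map id contMDiffOn_id (fun _ hx => hsub false hx) t) :=
            (F.map_comp (slice 1) (slice_smooth 1) hm1 id contMDiffOn_id
              (fun _ hx => hsub false hx) (slice_smooth 1) (mapsTo_univ _ _) t).symm
        _ = F.map (slice 1) (slice_smooth 1) hm1 sV := by rw [ht false]
        _ = σ₂ := by
            rw [hsV, F.map_comp (slice 1) (slice_smooth 1) hm1 (reparam ψ)
                (reparam_smooth hψ).contMDiffOn (mapsTo_univ _ _)
                (((reparam_smooth hψ).comp (slice_smooth' 1)).contMDiffOn) (mapsTo_univ _ _),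
              F.map_congr (reparam ψ ∘ slice 1) (slice 1) _ _ (slice_smooth 1) (mapsTo_univ _ _)
                (fun x _ => Prod.ext rfl (funext fun _ =>
                  Real.smoothTransition.one_of_one_le (by norm_num [slice])))]
            exact hτ1

end SmoothSetSheaf
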